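/- The function f(r) = ∫₀^r ψ(s)g(s) ds is concave on [0, ∞): f''(r) ≤ 0 for all r ≥ 0, and moreover f''(r) = 0 for all r > R. -/

import Mathlib

open Real MeasureTheory intervalIntegral

/-- The auxiliary function ψ(r) = exp(-α·min{r², R²}). -/
noncomputable def psiE (α R r : ℝ) : ℝ := Real.exp (-(α * min (r ^ 2) (R ^ 2)))

/-- Ψ(r) = ∫₀ʳ ψ(s) ds. -/
noncomputable def PsiE (α R r : ℝ) : ℝ := ∫ s in (0:ℝ)..r, psiE α R s

/-- g(r) = 1 - (1/2)·(∫₀^{min{r,R}} Ψ/ψ)/(∫₀^R Ψ/ψ). -/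
noncomputable def gEb (α R r : ℝ) : ℝ :=
  1 - (1 / 2) * (∫ s in (0:ℝ)..(min r R), PsiE α R s / psiE α R s) /
      (∫ s in (0:ℝ)..R, PsiE α R s / psiE α R s)

/-- The Eberle distance function f(r) = ∫₀ʳ ψ(s)·g(s) ds. -/
noncomputable def fEb (α R r : ℝ) : ℝ := ∫ s in (0:ℝ)..r, psiE α R s * gEb α R s


lemma psiE_pos (α R r : ℝ) : 0 < psiE α R r := Real.exp_pos _

lemma psiE_cont (α R : ℝ) : Continuous (psiE α R) := by
  unfold psiE; fun_prop

lemma psiE_intInt (α R a b : ℝ) : IntervalIntegrable (psiE α R) volume a b :=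
  (psiE_cont α R).intervalIntegrable a b

lemma hasDerivAt_PsiE (α R r : ℝ) : HasDerivAt (PsiE α R) (psiE α R r) r :=
  intervalIntegral.integral_hasDerivAt_right (psiE_intInt α R 0 r)
    ((psiE_cont α R).stronglyMeasurableAtFilter _ _)
    (psiE_cont α R).continuousAt

lemma PsiE_cont (α R : ℝ) : Continuous (PsiE α R) := by
  unfold PsiE; exact intervalIntegral.continuous_primitive (psiE_intInt α R) 0

noncomputable def qE (α R s : ℝ) : ℝ := PsiE α R s / psiE α R s
noncomputable def HE (α R r : ℝ) : ℝ := ∫ s in (0:ℝ)..r, qE α R s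

lemma qE_cont (α R : ℝ) : Continuous (qE α R) :=
  (PsiE_cont α R).div (psiE_cont α R) (fun x => (psiE_pos α R x).ne')

lemma qE_intInt (α R a b : ℝ) : IntervalIntegrable (qE α R) volume a b :=
  (qE_cont α R).intervalIntegrable a b

lemma hasDerivAt_HE (α R r : ℝ) : HasDerivAt (HE α R) (qE α R r) r :=
  intervalIntegral.integral_hasDerivAt_right (qE_intInt α R 0 r)
    ((qE_cont α R).stronglyMeasurableAtFilter _ _)
    (qE_cont α R).continuousAt

lemma HE_cont (α R : ℝ) : Continuous (HE α R) := by
  unfold HE; exact intervalIntegral.continuous_primitive (qE_intInt α R) 0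

lemma PsiE_nonneg (α R r : ℝ) (hr : 0 ≤ r) : 0 ≤ PsiE α R r :=
  intervalIntegral.integral_nonneg hr (fun x _ => (psiE_pos α R x).le)

lemma PsiE_pos (α R r : ℝ) (hr : 0 < r) : 0 < PsiE α R r :=
  intervalIntegral.intervalIntegral_pos_of_pos_on (psiE_intInt α R 0 r)
    (fun x _ => psiE_pos α R x) hr

lemma qE_nonneg (α R r : ℝ) (hr : 0 ≤ r) : 0 ≤ qE α R r :=
  div_nonneg (PsiE_nonneg α R r hr) (psiE_pos α R r).le

lemma HE_nonneg (α R r : ℝ) (hr : 0 ≤ r) : 0 ≤ HE α R r :=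
  intervalIntegral.integral_nonneg hr (fun x hx => qE_nonneg α R x hx.1)

lemma CE_pos (α R : ℝ) (hR : 0 < R) : 0 < HE α R R :=
  intervalIntegral.intervalIntegral_pos_of_pos_on (qE_intInt α R 0 R)
    (fun x hx => div_pos (PsiE_pos α R x hx.1) (psiE_pos α R x)) hR

lemma HE_le (α R r : ℝ) (hr0 : 0 ≤ r) (hrR : r ≤ R) : HE α R r ≤ HE α R R := by
  have h : HE α R R = HE α R r + ∫ s in r..R, qE α R s := by
    rw [HE, HE, intervalIntegral.integral_add_adjacent_intervals (qE_intInt α R 0 r) (qE_intInt α R r R)]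
  rw [h]
  have : 0 ≤ ∫ s in r..R, qE α R s :=
    intervalIntegral.integral_nonneg hrR (fun x hx => qE_nonneg α R x (hr0.trans hx.1))
  linarith


lemma gEb_eq (α R r : ℝ) : gEb α R r = 1 - (1 / 2) * HE α R (min r R) / HE α R R := rfl

lemma gEb_cont (α R : ℝ) : Continuous (gEb α R) := by
  have : Continuous (fun r => 1 - (1 / 2) * HE α R (min r R) / HE α R R) := by
    have h : Continuous (fun r : ℝ => HE α R (min r R)) :=
      (HE_cont α R).comp (continuous_id.min continuous_const)
    exact continuous_const.sub ((continuous_const.mul h).div_const _)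
  simpa only [← gEb_eq] using this

lemma gEb_ge_half (α R r : ℝ) (hα : 0 < α) (hR : 0 < R) (hr : 0 ≤ r) :
    1 / 2 ≤ gEb α R r := by
  rw [gEb_eq]
  have hC := CE_pos α R hR
  have h1 : HE α R (min r R) ≤ HE α R R := HE_le α R _ (le_min hr hR.le) (min_le_right _ _)
  have h2 : (1 / 2) * HE α R (min r R) / HE α R R ≤ 1 / 2 := by
    rw [div_le_iff₀ hC]; nlinarith
  linarith

lemma gEb_pos (α R r : ℝ) (hα : 0 < α) (hR : 0 < R) (hr : 0 ≤ r) : 0 < gEb α R r :=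
  lt_of_lt_of_le (by norm_num) (gEb_ge_half α R r hα hR hr)

lemma gEb_of_ge (α R r : ℝ) (hR : 0 < R) (hr : R ≤ r) : gEb α R r = 1 / 2 := by
  rw [gEb_eq, min_eq_right hr, mul_div_assoc, div_self (CE_pos α R hR).ne']
  norm_num

lemma psiE_of_ge (α R r : ℝ) (hR : 0 < R) (hr : R ≤ r) :
    psiE α R r = Real.exp (-(α * R ^ 2)) := by
  rw [psiE, min_eq_right (by nlinarith : R ^ 2 ≤ r ^ 2)]

noncomputable def FE (α R r : ℝ) : ℝ := psiE α R r * gEb α R r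

lemma FE_cont (α R : ℝ) : Continuous (FE α R) := (psiE_cont α R).mul (gEb_cont α R)

lemma FE_of_ge (α R r : ℝ) (hR : 0 < R) (hr : R ≤ r) :
    FE α R r = Real.exp (-(α * R ^ 2)) / 2 := by
  rw [FE, psiE_of_ge α R r hR hr, gEb_of_ge α R r hR hr]; ring

lemma hasDerivAt_fEb (α R r : ℝ) : HasDerivAt (fEb α R) (FE α R r) r :=
  intervalIntegral.integral_hasDerivAt_right
    (((psiE_cont α R).mul (gEb_cont α R)).intervalIntegrable 0 r)
    ((FE_cont α R).stronglyMeasurableAtFilter _ _)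
    (FE_cont α R).continuousAt

lemma deriv_fEb (α R : ℝ) : deriv (fEb α R) = FE α R :=
  funext fun r => (hasDerivAt_fEb α R r).deriv

lemma hasDerivAt_psiE (α R r : ℝ) (hR : 0 < R) (h1 : -R < r) (h2 : r < R) :
    HasDerivAt (psiE α R) (psiE α R r * (-(α * (2 * r)))) r := by
  have he : HasDerivAt (fun s : ℝ => Real.exp (-(α * s ^ 2)))
      (Real.exp (-(α * r ^ 2)) * (-(α * (2 * r)))) r := by
    have hp : HasDerivAt (fun s : ℝ => s ^ 2) (2 * r) r := by
      simpa using hasDerivAt_pow 2 r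
    exact ((hp.const_mul α).neg).exp
  have heq : (fun s : ℝ => Real.exp (-(α * s ^ 2))) =ᶠ[nhds r] psiE α R := by
    filter_upwards [Ioo_mem_nhds h1 h2] with s hs
    have : s ^ 2 < R ^ 2 := by nlinarith [hs.1, hs.2, abs_lt.2 ⟨hs.1, hs.2⟩]
    rw [psiE, min_eq_left this.le]
  have hmin : psiE α R r = Real.exp (-(α * r ^ 2)) := by
    rw [psiE, min_eq_left (by nlinarith : r ^ 2 ≤ R ^ 2)]
  rw [hmin]
  exact he.congr_of_eventuallyEq heq.symm

lemma hasDerivAt_gEb (α R r : ℝ) (h2 : r < R) :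
    HasDerivAt (gEb α R) (-((1 / 2) * qE α R r / HE α R R)) r := by
  have hg : HasDerivAt (fun s => 1 - (1 / 2) * HE α R s / HE α R R)
      (-((1 / 2) * qE α R r / HE α R R)) r := by
    have := (((hasDerivAt_HE α R r).const_mul (1/2)).div_const (HE α R R)).const_sub 1
    convert this using 1
  have heq : (fun s => 1 - (1 / 2) * HE α R s / HE α R R) =ᶠ[nhds r] gEb α R := by
    filter_upwards [Iio_mem_nhds h2] with s hs
    rw [gEb_eq, min_eq_left (le_of_lt hs)]
  exact hg.congr_of_eventuallyEq heq.symm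

lemma hasDerivAt_FE (α R r : ℝ) (hR : 0 < R) (h1 : -R < r) (h2 : r < R) :
    HasDerivAt (FE α R)
      (psiE α R r * (-(α * (2 * r))) * gEb α R r +
        psiE α R r * (-((1 / 2) * qE α R r / HE α R R))) r :=
  (hasDerivAt_psiE α R r hR h1 h2).mul (hasDerivAt_gEb α R r h2)

lemma FE_deriv_nonpos (α R r : ℝ) (hα : 0 < α) (hR : 0 < R) (hr0 : 0 ≤ r) (hrR : r < R) :
    psiE α R r * (-(α * (2 * r))) * gEb α R r +
      psiE α R r * (-((1 / 2) * qE α R r / HE α R R)) ≤ 0 := by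
  have hp := psiE_pos α R r
  have hg := gEb_pos α R r hα hR hr0
  have hq := qE_nonneg α R r hr0
  have hC := CE_pos α R hR
  have t1 : psiE α R r * (-(α * (2 * r))) * gEb α R r ≤ 0 := by
    have h0 : 0 ≤ α * (2 * r) * (psiE α R r * gEb α R r) := by positivity
    nlinarith [h0]
  have t2 : psiE α R r * (-((1 / 2) * qE α R r / HE α R R)) ≤ 0 := by
    have : 0 ≤ (1 / 2) * qE α R r / HE α R R := by positivity
    nlinarith
  linarith

lemma deriv_FE_of_ge (α R r : ℝ) (hR : 0 < R) (hr : R ≤ r) : deriv (FE α R) r = 0 := by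
  rcases eq_or_lt_of_le hr with h | h
  · subst h
    by_cases hd : DifferentiableAt ℝ (FE α R) R
    · have h1 : derivWithin (FE α R) (Set.Ici R) R = deriv (FE α R) R :=
        hd.derivWithin (uniqueDiffOn_Ici R R Set.self_mem_Ici)
      have h2 : derivWithin (FE α R) (Set.Ici R) R
          = derivWithin (fun _ => Real.exp (-(α * R ^ 2)) / 2) (Set.Ici R) R := by
        apply derivWithin_congr
        · intro y hy; exact FE_of_ge α R y hR hy
        · exact FE_of_ge α R R hR le_rfl
      rw [show derivWithin (fun _ => Real.exp (-(α * R ^ 2)) / 2) (Set.Ici R) R = 0 from by simp] at h2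
      rw [← h1, h2]
    · exact deriv_zero_of_not_differentiableAt hd
  · have heq : FE α R =ᶠ[nhds r] fun _ => Real.exp (-(α * R ^ 2)) / 2 := by
      filter_upwards [Ioi_mem_nhds h] with s hs
      exact FE_of_ge α R s hR (le_of_lt hs)
    rw [heq.deriv_eq, deriv_const]

lemma antitoneOn_FE_Icc (α R : ℝ) (hα : 0 < α) (hR : 0 < R) :
    AntitoneOn (FE α R) (Set.Icc 0 R) := by
  apply antitoneOn_of_deriv_nonpos (convex_Icc 0 R) (FE_cont α R).continuousOn
  · intro x hx
    rw [interior_Icc] at hx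
    exact (hasDerivAt_FE α R x hR (by linarith [hx.1]) hx.2).differentiableAt.differentiableWithinAt
  · intro x hx
    rw [interior_Icc] at hx
    rw [(hasDerivAt_FE α R x hR (by linarith [hx.1]) hx.2).deriv]
    exact FE_deriv_nonpos α R x hα hR hx.1.le hx.2

lemma antitoneOn_FE (α R : ℝ) (hα : 0 < α) (hR : 0 < R) :
    AntitoneOn (FE α R) (Set.Ici 0) := by
  intro x hx y hy hxy
  simp only [Set.mem_Ici] at hx hy
  rcases le_total y R with h | h
  · exact antitoneOn_FE_Icc α R hα hR ⟨hx, hxy.trans h⟩ ⟨hy, h⟩ hxy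
  · rcases le_total x R with h' | h'
    · calc FE α R y = FE α R R := by
            rw [FE_of_ge α R y hR h, FE_of_ge α R R hR le_rfl]
        _ ≤ FE α R x := antitoneOn_FE_Icc α R hα hR ⟨hx, h'⟩ ⟨hR.le, le_rfl⟩ h'
    · rw [FE_of_ge α R y hR h, FE_of_ge α R x hR h']


/-- f is concave on [0,∞): f''(r) ≤ 0 for r ≥ 0 and f''(r) = 0 for r > R. -/
theorem f_concave (α R : ℝ) (hα : 0 < α) (hR : 0 < R) :
    ConcaveOn ℝ (Set.Ici 0) (fEb α R) ∧
    (∀ r : ℝ, 0 ≤ r → deriv (deriv (fEb α R)) r ≤ 0) ∧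
    (∀ r : ℝ, R < r → deriv (deriv (fEb α R)) r = 0) := by
  refine ⟨?_, ?_, ?_⟩
  · apply AntitoneOn.concaveOn_of_deriv (convex_Ici 0)
    · exact fun r _ => (hasDerivAt_fEb α R r).differentiableAt.continuousAt.continuousWithinAt
    · exact fun r _ => (hasDerivAt_fEb α R r).differentiableAt.differentiableWithinAt
    · rw [deriv_fEb α R, interior_Ici]
      exact (antitoneOn_FE α R hα hR).mono Set.Ioi_subset_Ici_self
  · intro r hr
    rw [deriv_fEb α R]
    rcases lt_or_ge r R with h | h
    · rw [(hasDerivAt_FE α R r hR (by linarith) h).deriv]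
      exact FE_deriv_nonpos α R r hα hR hr h
    · exact le_of_eq (deriv_FE_of_ge α R r hR h)
  · intro r hr
    rw [deriv_fEb α R]
    exact deriv_FE_of_ge α R r hR hr.le
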